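/- arXiv:2407.02578 — 2 statements merged into one kernel-verified Lean document; each statement's English description precedes it below -/
import Mathlib

section
/- Let d ≥ 1 and T > 0. Let u, v : [0,T] × ℝ^d → ℝ^d be bounded and continuously differentiable with A := sup_{t,x} ‖D_x u(t,x)‖ < ∞ (operator norm of the spatial derivative). Let ξ, ξ̃ : [0,T] × ℝ^d → ℝ be twice continuously differentiable with bounded first and second spatial derivatives, satisfying the transport equations ∂_t ξ + u·∇ξ = 0 and ∂_t ξ̃ + (u+v)·∇ξ̃ = 0 pointwise, with ∇ξ(0,·) = ∇ξ̃(0,·). Assume also that ∇(v·∇ξ̃) is bounded and continuous. Then for every t ∈ [0,T]: sup_x |∇ξ(t,x) − ∇ξ̃(t,x)| ≤ e^{At} ∫_0^t sup_x |∇(v·∇ξ̃)(s,x)| ds. -/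
open MeasureTheory Set

open Filter TopologicalSpace
open scoped Nat Topology

section Helpers

variable {E : Type*} [NormedAddCommGroup E] [NormedSpace ℝ E]

noncomputable def iota (E : Type*) [NormedAddCommGroup E] [NormedSpace ℝ E] :
    E →L[ℝ] ℝ × E := (0 : E →L[ℝ] ℝ).prod (ContinuousLinearMap.id ℝ E)

lemma hasFDerivAt_iota (t : ℝ) (z : E) :
    HasFDerivAt (fun y : E => ((t : ℝ), y)) (iota E) z :=
  (hasFDerivAt_const t z).prodMk (hasFDerivAt_id z)

@[simp] lemma iota_apply (e : E) : iota E e = (0, e) := rfl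

lemma hasFDerivAt_partial {G : Type*} [NormedAddCommGroup G] [NormedSpace ℝ G]
    {f : ℝ → E → G} (hf : Differentiable ℝ (fun p : ℝ × E => f p.1 p.2))
    (t : ℝ) (y : E) :
    HasFDerivAt (f t) ((fderiv ℝ (fun p : ℝ × E => f p.1 p.2) (t, y)).comp (iota E)) y :=
  (hf (t, y)).hasFDerivAt.comp y (hasFDerivAt_iota t y)

lemma fderiv_partial {G : Type*} [NormedAddCommGroup G] [NormedSpace ℝ G]
    {f : ℝ → E → G} (hf : Differentiable ℝ (fun p : ℝ × E => f p.1 p.2))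
    (t : ℝ) (y : E) :
    fderiv ℝ (f t) y = (fderiv ℝ (fun p : ℝ × E => f p.1 p.2) (t, y)).comp (iota E) :=
  (hasFDerivAt_partial hf t y).fderiv


lemma partial_fderiv_cont {G : Type*} [NormedAddCommGroup G] [NormedSpace ℝ G]
    {f : ℝ → E → G} (hf : ContDiff ℝ 1 (fun p : ℝ × E => f p.1 p.2)) :
    Continuous (fun p : ℝ × E => fderiv ℝ (f p.1) p.2) := by
  have hd : Differentiable ℝ (fun p : ℝ × E => f p.1 p.2) := hf.differentiable one_ne_zero
  have : (fun p : ℝ × E => fderiv ℝ (f p.1) p.2)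
      = fun p : ℝ × E => (fderiv ℝ (fun p : ℝ × E => f p.1 p.2) p).comp (iota E) := by
    funext p
    exact fderiv_partial hd p.1 p.2
  rw [this]
  exact (hf.continuous_fderiv one_ne_zero).clm_comp continuous_const

/-- The key pointwise computation: for `ξ` transported by `b` (at time `t`),
the full derivative of `p ↦ ∇ξ(p₁, p₂)` in direction `(1, w)` is given by
`-∇(∇ξ ⋅ (b - w))`. -/
lemma transport_core (ξ : ℝ → E → ℝ) (b : ℝ → E → E)
    (hξ : ContDiff ℝ 2 (fun p : ℝ × E => ξ p.1 p.2))
    (hb : ContDiff ℝ 1 (fun p : ℝ × E => b p.1 p.2))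
    (t : ℝ) (htr : ∀ y, deriv (fun s => ξ s y) t + fderiv ℝ (ξ t) y (b t y) = 0)
    (x : E) (w : E) :
    DifferentiableAt ℝ (fun y => fderiv ℝ (ξ t) y) x ∧
    ∃ D : (ℝ × E) →L[ℝ] (E →L[ℝ] ℝ),
      HasFDerivAt (fun p : ℝ × E => fderiv ℝ (ξ p.1) p.2) D (t, x) ∧
      D (1, w) = - fderiv ℝ (fun y => fderiv ℝ (ξ t) y (b t y - w)) x := by
  set Ξ : ℝ × E → ℝ := fun p => ξ p.1 p.2 with hΞdef
  have hΞd : Differentiable ℝ Ξ := hξ.differentiable two_ne_zero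
  have hDΞ : ContDiff ℝ 1 (fderiv ℝ Ξ) := hξ.fderiv_right le_rfl
  set H : (ℝ × E) →L[ℝ] (ℝ × E) →L[ℝ] ℝ := fderiv ℝ (fderiv ℝ Ξ) (t, x) with hHdef
  have hH : HasFDerivAt (fderiv ℝ Ξ) H (t, x) :=
    ((hDΞ.differentiable one_ne_zero) (t, x)).hasFDerivAt
  -- spatial partials
  have hpart : ∀ s y, HasFDerivAt (ξ s) ((fderiv ℝ Ξ (s, y)).comp (iota E)) y :=
    fun s y => hasFDerivAt_partial hΞd s y
  have hW : ∀ s y, fderiv ℝ (ξ s) y = (fderiv ℝ Ξ (s, y)).comp (iota E) :=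
    fun s y => (hpart s y).fderiv
  -- y ↦ DΞ (t, y)
  have hKx : HasFDerivAt (fun y => fderiv ℝ Ξ (t, y)) (H.comp (iota E)) x :=
    hH.comp x (hasFDerivAt_iota t x)
  -- b t differentiable at x
  have hbd : Differentiable ℝ (fun p : ℝ × E => b p.1 p.2) := hb.differentiable one_ne_zero
  have hDb : HasFDerivAt (b t) (fderiv ℝ (b t) x) x :=
    ((hasFDerivAt_partial hbd t x).differentiableAt).hasFDerivAt
  set Db : E →L[ℝ] E := fderiv ℝ (b t) x
  -- the transport identity in terms of the full derivative
  have htr' : ∀ y, fderiv ℝ Ξ (t, y) (1, 0) = -(fderiv ℝ Ξ (t, y) (0, b t y)) := by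
    intro y
    have h1 : HasDerivAt (fun s => ξ s y) (fderiv ℝ Ξ (t, y) (1, 0)) t :=
      by have := (hΞd (t, y)).hasFDerivAt.comp_hasDerivAt t
          ((hasDerivAt_id t).prodMk (hasDerivAt_const t y)); exact this
    have h2 := htr y
    rw [h1.deriv, hW t y] at h2
    simp only [ContinuousLinearMap.comp_apply, iota_apply] at h2
    linarith
  -- differentiate the transport identity in y at x
  have h1d : HasFDerivAt (fun y => fderiv ℝ Ξ (t, y) ((1 : ℝ), (0 : E)))
      ((H.comp (iota E)).flip (1, 0)) x := by
    have := hKx.clm_apply (hasFDerivAt_const ((1 : ℝ), (0 : E)) x)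
    simpa using this
  have h2d : HasFDerivAt (fun y => fderiv ℝ Ξ (t, y) (0, b t y))
      ((fderiv ℝ Ξ (t, x)).comp ((0 : E →L[ℝ] ℝ).prod Db)
        + (H.comp (iota E)).flip (0, b t x)) x := by
    have hm : HasFDerivAt (fun y : E => ((0 : ℝ), b t y)) ((0 : E →L[ℝ] ℝ).prod Db) x :=
      (hasFDerivAt_const (0 : ℝ) x).prodMk hDb
    have := hKx.clm_apply hm
    convert this using 2
  have heq : (fun y => fderiv ℝ Ξ (t, y) ((1 : ℝ), (0 : E)))
      = fun y => -(fderiv ℝ Ξ (t, y) (0, b t y)) := funext fun y => htr' y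
  have hstar : (H.comp (iota E)).flip ((1 : ℝ), (0 : E))
      = -((fderiv ℝ Ξ (t, x)).comp ((0 : E →L[ℝ] ℝ).prod Db)
        + (H.comp (iota E)).flip (0, b t x)) := by
    rw [heq] at h1d
    exact h1d.unique h2d.neg
  -- symmetry of the second derivative
  have hsymm : ∀ a c : ℝ × E, H a c = H c a := fun a c =>
    (hξ.contDiffAt.isSymmSndFDerivAt (by simp)) a c
  -- W as a function of p
  set T : ((ℝ × E) →L[ℝ] ℝ) →L[ℝ] (E →L[ℝ] ℝ) :=
    (ContinuousLinearMap.compL ℝ E (ℝ × E) ℝ).flip (iota E) with hTdef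
  have hT : ∀ L : (ℝ × E) →L[ℝ] ℝ, T L = L.comp (iota E) := fun L => rfl
  have hWq : (fun p : ℝ × E => fderiv ℝ (ξ p.1) p.2) = fun p => T (fderiv ℝ Ξ p) := by
    funext p
    rw [hW p.1 p.2, hT]
  have hdiff : DifferentiableAt ℝ (fun y => fderiv ℝ (ξ t) y) x := by
    have : (fun y => fderiv ℝ (ξ t) y) = fun y => T (fderiv ℝ Ξ (t, y)) := by
      funext y; rw [hW t y, hT]
    rw [this]
    exact (T.hasFDerivAt.comp x hKx).differentiableAt
  refine ⟨hdiff, T.comp H, ?_, ?_⟩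
  · rw [hWq]
    exact T.hasFDerivAt.comp (t, x) hH
  · -- compute the RHS derivative
    have hrhsfun : (fun y => fderiv ℝ (ξ t) y (b t y - w))
        = fun y => fderiv ℝ Ξ (t, y) (0, b t y - w) := by
      funext y
      rw [hW t y]
      simp
    have hm2 : HasFDerivAt (fun y : E => ((0 : ℝ), b t y - w)) ((0 : E →L[ℝ] ℝ).prod Db) x :=
      (hasFDerivAt_const (0 : ℝ) x).prodMk (hDb.sub_const w)
    have hrhsd : HasFDerivAt (fun y => fderiv ℝ Ξ (t, y) (0, b t y - w))
        ((fderiv ℝ Ξ (t, x)).comp ((0 : E →L[ℝ] ℝ).prod Db)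
          + (H.comp (iota E)).flip (0, b t x - w)) x := by
      have := hKx.clm_apply hm2
      convert this using 2
    have hrhs : fderiv ℝ (fun y => fderiv ℝ (ξ t) y (b t y - w)) x
        = (fderiv ℝ Ξ (t, x)).comp ((0 : E →L[ℝ] ℝ).prod Db)
          + (H.comp (iota E)).flip (0, b t x - w) := by
      rw [hrhsfun]
      exact hrhsd.fderiv
    rw [hrhs]
    ext e
    have hstar_e := congrArg (fun (L : E →L[ℝ] ℝ) => L e) hstar
    simp only [ContinuousLinearMap.flip_apply, ContinuousLinearMap.comp_apply,
      ContinuousLinearMap.neg_apply, ContinuousLinearMap.add_apply, iota_apply,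
      ContinuousLinearMap.prod_apply, ContinuousLinearMap.zero_apply] at hstar_e
    have hTe : ∀ L : (ℝ × E) →L[ℝ] ℝ, T L e = L (0, e) := fun L => by
      rw [hT]; simp
    have hsplit : ((1 : ℝ), w) = ((1 : ℝ), (0 : E)) + ((0 : ℝ), w) := by simp
    have hbw : ((0 : ℝ), b t x - w) = ((0 : ℝ), b t x) - ((0 : ℝ), w) := by simp
    calc (T.comp H) (1, w) e = H (1, w) (0, e) := by
          rw [ContinuousLinearMap.comp_apply, hTe]
      _ = H (1, 0) (0, e) + H (0, w) (0, e) := by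
          rw [hsplit, map_add, ContinuousLinearMap.add_apply]
      _ = -(fderiv ℝ Ξ (t, x) (0, Db e) + H (0, e) (0, b t x - w)) := by
          rw [hsymm (1, 0) (0, e), hstar_e, hsymm (0, w) (0, e), hbw, map_sub]
          ring
      _ = (-((fderiv ℝ Ξ (t, x)).comp ((0 : E →L[ℝ] ℝ).prod Db)
            + (H.comp (iota E)).flip (0, b t x - w))) e := by
          simp

lemma ciSup_eq_ciSup_denseSeq {X : Type*} [TopologicalSpace X] [SeparableSpace X] [Nonempty X]
    (h : X → ℝ) (hc : Continuous h) (C : ℝ) (hb : ∀ y, h y ≤ C) :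
    ⨆ y, h y = ⨆ n, h (denseSeq X n) := by
  have hbdd : BddAbove (Set.range fun n => h (denseSeq X n)) := by
    refine ⟨C, ?_⟩
    rintro _ ⟨n, rfl⟩
    exact hb _
  have hbdd' : BddAbove (Set.range h) := by
    refine ⟨C, ?_⟩
    rintro _ ⟨y, rfl⟩
    exact hb _
  apply le_antisymm
  · apply ciSup_le
    intro y
    have hmem : h y ∈ closure (h '' Set.range (denseSeq X)) := by
      apply hc.range_subset_closure_image_dense (denseRange_denseSeq X)
      exact Set.mem_range_self y
    rw [← Set.range_comp] at hmem
    have hcl : closure (Set.range (h ∘ denseSeq X)) ⊆ Iic (⨆ n, h (denseSeq X n)) := by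
      apply closure_minimal _ isClosed_Iic
      rintro _ ⟨n, rfl⟩
      exact le_ciSup hbdd n
    exact hcl hmem
  · exact ciSup_le fun n => le_ciSup hbdd' (denseSeq X n)

lemma my_gronwall {A M t₀ : ℝ} (hA : 0 ≤ A) (hM : 0 ≤ M) (f g : ℝ → ℝ)
    (hf : ContinuousOn f (Icc 0 t₀))
    (hfM : ∀ t ∈ Icc (0:ℝ) t₀, f t ≤ M)
    (hg0 : ∀ t ∈ Icc (0:ℝ) t₀, 0 ≤ g t)
    (hgmono : ∀ s t : ℝ, 0 ≤ s → s ≤ t → t ≤ t₀ → g s ≤ g t)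
    (hyp : ∀ t ∈ Icc (0:ℝ) t₀, f t ≤ g t + A * ∫ s in (0:ℝ)..t, f s) :
    ∀ t ∈ Icc (0:ℝ) t₀, f t ≤ Real.exp (A*t) * g t := by
  have key : ∀ n : ℕ, ∀ t ∈ Icc (0:ℝ) t₀, f t ≤ Real.exp (A*t) * g t + M * (A*t)^n / n ! := by
    intro n
    induction n with
    | zero =>
      intro t ht
      have hg := hg0 t ht
      calc f t ≤ M := hfM t ht
        _ ≤ Real.exp (A*t) * g t + M * (A*t)^0 / 0! := by simp; positivity
    | succ n ih =>
      rcases eq_or_lt_of_le hA with h0 | h0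
      · intro t ht
        have h := hyp t ht
        rw [← h0] at h ⊢
        simpa using h
      intro t ht
      obtain ⟨ht0, htT⟩ := ht
      have hint_f : IntervalIntegrable f volume 0 t := by
        apply ContinuousOn.intervalIntegrable
        apply hf.mono
        rw [uIcc_of_le ht0]
        exact Icc_subset_Icc le_rfl htT
      have hint_1 : IntervalIntegrable (fun s => Real.exp (A*s) * g t) volume 0 t := by
        apply ContinuousOn.intervalIntegrable; fun_prop
      have hint_2 : IntervalIntegrable (fun s => M * (A*s)^n / n !) volume 0 t := by
        apply ContinuousOn.intervalIntegrable; fun_prop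
      have hmono : (∫ s in (0:ℝ)..t, f s) ≤
          ∫ s in (0:ℝ)..t, (Real.exp (A*s) * g t + M * (A*s)^n / n !) := by
        apply intervalIntegral.integral_mono_on ht0 hint_f (hint_1.add hint_2)
        intro s hs
        have hs' : s ∈ Icc (0:ℝ) t₀ := ⟨hs.1, hs.2.trans htT⟩
        calc f s ≤ Real.exp (A*s) * g s + M * (A*s)^n / n ! := ih s hs'
          _ ≤ Real.exp (A*s) * g t + M * (A*s)^n / n ! := by
              gcongr
              exact hgmono s t hs.1 hs.2 htT
      have hIexp : (∫ s in (0:ℝ)..t, Real.exp (A*s)) = (Real.exp (A*t) - 1)/A := by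
        rw [intervalIntegral.integral_comp_mul_left (fun x => Real.exp x) h0.ne']
        simp [smul_eq_mul]
        ring
      have hIpow : (∫ s in (0:ℝ)..t, (s:ℝ)^n) = t^(n+1)/(n+1) := by
        simpa using (integral_pow n (a := (0:ℝ)) (b := t))
      have hsplit : (∫ s in (0:ℝ)..t, (Real.exp (A*s) * g t + M * (A*s)^n / n !)) =
          (Real.exp (A*t) - 1)/A * g t + (M * A^n / n !) * (t^(n+1)/(n+1)) := by
        rw [intervalIntegral.integral_add hint_1 hint_2]
        have h2 : (fun s => M * (A*s)^n / n !) = fun s => (M * A^n / n !) * s^n := by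
          funext s; rw [mul_pow]; ring
        rw [intervalIntegral.integral_mul_const, hIexp, h2,
          intervalIntegral.integral_const_mul, hIpow]
      have hfact : ((n+1)! : ℝ) = (n+1) * n ! := by
        rw [Nat.factorial_succ]; push_cast; ring
      have hgt := hg0 t ⟨ht0, htT⟩
      calc f t ≤ g t + A * ∫ s in (0:ℝ)..t, f s := hyp t ⟨ht0, htT⟩
        _ ≤ g t + A * ∫ s in (0:ℝ)..t, (Real.exp (A*s) * g t + M * (A*s)^n / n !) := by
            gcongr
        _ = Real.exp (A*t) * g t + M * (A*t)^(n+1) / (n+1)! := by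
            rw [hsplit, hfact, mul_pow]
            have hn : ((n:ℝ)+1) ≠ 0 := by positivity
            have hfn : (n ! : ℝ) ≠ 0 := by positivity
            field_simp
            ring
  intro t ht
  have hlim : Tendsto (fun n : ℕ => Real.exp (A*t) * g t + M * (A*t)^n / n !)
      atTop (𝓝 (Real.exp (A*t) * g t)) := by
    have h1 := (FloorSemiring.tendsto_pow_div_factorial_atTop (K := ℝ) (A*t)).const_mul M
    have h2 : Tendsto (fun n : ℕ => Real.exp (A*t) * g t + M * ((A*t)^n / n !))
        atTop (𝓝 (Real.exp (A*t) * g t + M * 0)) := tendsto_const_nhds.add h1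
    simpa [mul_div_assoc] using h2
  exact ge_of_tendsto' hlim (fun n => key n t ht)

end Helpers

set_option maxHeartbeats 1000000 in
/-- Stability of transported phase gradients: if `ξ` is transported by `u` and `ξ̃` by
`u + v`, with the same initial gradients, `‖D_x u‖ ≤ A`, and all data suitably bounded
and regular on `[0,T] × ℝ^d`, then
`sup_x |∇ξ(t,x) − ∇ξ̃(t,x)| ≤ e^{At} ∫₀ᵗ sup_x |∇(v·∇ξ̃)(s,x)| ds`. -/
theorem phase_gradient_stability
    (d : ℕ) (hd : 1 ≤ d) (T : ℝ) (hT : 0 < T)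
    (u v : ℝ → EuclideanSpace ℝ (Fin d) → EuclideanSpace ℝ (Fin d))
    (hu : ContDiff ℝ 1 (fun p : ℝ × EuclideanSpace ℝ (Fin d) => u p.1 p.2))
    (hv : ContDiff ℝ 1 (fun p : ℝ × EuclideanSpace ℝ (Fin d) => v p.1 p.2))
    (Bu : ℝ) (huv_bd : ∀ t ∈ Icc (0:ℝ) T, ∀ x, ‖u t x‖ ≤ Bu ∧ ‖v t x‖ ≤ Bu)
    (A : ℝ) (hA : ∀ t ∈ Icc (0:ℝ) T, ∀ x, ‖fderiv ℝ (u t) x‖ ≤ A)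
    (ξ ξ' : ℝ → EuclideanSpace ℝ (Fin d) → ℝ)
    (hξ : ContDiff ℝ 2 (fun p : ℝ × EuclideanSpace ℝ (Fin d) => ξ p.1 p.2))
    (hξ' : ContDiff ℝ 2 (fun p : ℝ × EuclideanSpace ℝ (Fin d) => ξ' p.1 p.2))
    (B : ℝ)
    (hξ_bd : ∀ t ∈ Icc (0:ℝ) T, ∀ x,
      ‖fderiv ℝ (ξ t) x‖ ≤ B ∧ ‖iteratedFDeriv ℝ 2 (ξ t) x‖ ≤ B ∧
      ‖fderiv ℝ (ξ' t) x‖ ≤ B ∧ ‖iteratedFDeriv ℝ 2 (ξ' t) x‖ ≤ B)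
    (htransport : ∀ t ∈ Icc (0:ℝ) T, ∀ x,
      deriv (fun s => ξ s x) t + fderiv ℝ (ξ t) x (u t x) = 0)
    (htransport' : ∀ t ∈ Icc (0:ℝ) T, ∀ x,
      deriv (fun s => ξ' s x) t + fderiv ℝ (ξ' t) x (u t x + v t x) = 0)
    (hinit : ∀ x, fderiv ℝ (ξ 0) x = fderiv ℝ (ξ' 0) x)
    (Bg : ℝ)
    (hg_bd : ∀ t ∈ Icc (0:ℝ) T, ∀ x,
      ‖fderiv ℝ (fun y => fderiv ℝ (ξ' t) y (v t y)) x‖ ≤ Bg)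
    (hg_cont : Continuous (fun p : ℝ × EuclideanSpace ℝ (Fin d) =>
      fderiv ℝ (fun y => fderiv ℝ (ξ' p.1) y (v p.1 y)) p.2)) :
    ∀ t ∈ Icc (0:ℝ) T, ∀ x,
      ‖fderiv ℝ (ξ t) x - fderiv ℝ (ξ' t) x‖ ≤
        Real.exp (A * t) *
          ∫ s in (0:ℝ)..t, ⨆ y, ‖fderiv ℝ (fun z => fderiv ℝ (ξ' s) z (v s z)) y‖ := by
  have hA0 : 0 ≤ A := (norm_nonneg _).trans (hA 0 ⟨le_rfl, hT.le⟩ 0)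
  have hBg0 : 0 ≤ Bg := (norm_nonneg _).trans (hg_bd 0 ⟨le_rfl, hT.le⟩ 0)
  have hB0 : 0 ≤ B := (norm_nonneg _).trans (hξ_bd 0 ⟨le_rfl, hT.le⟩ 0).1
  have hBu0 : 0 ≤ Bu := (norm_nonneg _).trans (huv_bd 0 ⟨le_rfl, hT.le⟩ 0).1
  -- the forcing function and its properties
  set G : ℝ → ℝ := fun s => ⨆ y, ‖fderiv ℝ (fun z => fderiv ℝ (ξ' s) z (v s z)) y‖ with hGdef
  have hgfc : ∀ s : ℝ, Continuous (fun y : (EuclideanSpace ℝ (Fin d)) => ‖fderiv ℝ (fun z => fderiv ℝ (ξ' s) z (v s z)) y‖) :=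
    fun s => (hg_cont.comp (Continuous.prodMk_right s)).norm
  have hgb : ∀ s ∈ Icc (0:ℝ) T, BddAbove
      (range fun y : (EuclideanSpace ℝ (Fin d)) => ‖fderiv ℝ (fun z => fderiv ℝ (ξ' s) z (v s z)) y‖) := by
    intro s hs
    exact ⟨Bg, by rintro _ ⟨y, rfl⟩; exact hg_bd s hs y⟩
  have hGpt : ∀ s ∈ Icc (0:ℝ) T, ∀ y : (EuclideanSpace ℝ (Fin d)),
      ‖fderiv ℝ (fun z => fderiv ℝ (ξ' s) z (v s z)) y‖ ≤ G s :=
    fun s hs y => le_ciSup (hgb s hs) y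
  have hG0 : ∀ s ∈ Icc (0:ℝ) T, 0 ≤ G s :=
    fun s hs => (norm_nonneg _).trans (hGpt s hs 0)
  have hGub : ∀ s ∈ Icc (0:ℝ) T, G s ≤ Bg :=
    fun s hs => ciSup_le (fun y => hg_bd s hs y)
  -- integrability of G
  have hGint : ∀ t ∈ Icc (0:ℝ) T, IntervalIntegrable G volume 0 t := by
    intro t ht
    set G₂ : ℝ → ℝ := fun s => ⨆ n, ‖fderiv ℝ (fun z => fderiv ℝ (ξ' s) z (v s z)) (denseSeq (EuclideanSpace ℝ (Fin d)) n)‖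
      with hG₂def
    have hG₂meas : Measurable G₂ := by
      apply Measurable.iSup
      intro n
      exact ((hg_cont.comp (continuous_id.prodMk continuous_const)).norm).measurable
    have hG₂eq : ∀ s ∈ Icc (0:ℝ) T, G s = G₂ s := by
      intro s hs
      exact ciSup_eq_ciSup_denseSeq _ (hgfc s) Bg (fun y => hg_bd s hs y)
    rw [intervalIntegrable_iff_integrableOn_Ioc_of_le ht.1]
    have hsub : Ioc (0:ℝ) t ⊆ Icc 0 T := fun s hs => ⟨hs.1.le, hs.2.trans ht.2⟩
    have h2int : IntegrableOn G₂ (Ioc (0:ℝ) t) volume := by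
      apply Measure.integrableOn_of_bounded (M := Bg) measure_Ioc_lt_top.ne
        hG₂meas.aestronglyMeasurable
      filter_upwards [ae_restrict_mem measurableSet_Ioc] with s hs
      have hs' := hsub hs
      rw [Real.norm_eq_abs, abs_of_nonneg]
      · rw [← hG₂eq s hs']; exact hGub s hs'
      · rw [← hG₂eq s hs']; exact hG0 s hs'
    exact h2int.congr_fun (fun s hs => (hG₂eq s (hsub hs)).symm) measurableSet_Ioc
  intro t₀ ht₀ x₀
  have hIccsub : Icc (0:ℝ) t₀ ⊆ Icc 0 T := Icc_subset_Icc le_rfl ht₀.2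
  -- differentiability of u in space
  have hud : ∀ s : ℝ, ∀ y : (EuclideanSpace ℝ (Fin d)), DifferentiableAt ℝ (u s) y :=
    fun s y => (hasFDerivAt_partial (hu.differentiable one_ne_zero) s y).differentiableAt
  have hvd : ∀ s : ℝ, ∀ y : (EuclideanSpace ℝ (Fin d)), DifferentiableAt ℝ (v s) y :=
    fun s y => (hasFDerivAt_partial (hv.differentiable one_ne_zero) s y).differentiableAt
  -- the characteristic curve through (t₀, x₀)
  have hpl : IsPicardLindelof u (tmin := 0) (tmax := t₀) ⟨t₀, ht₀.1, le_rfl⟩ x₀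
      (⟨Bu * T + 1, by positivity⟩ : NNReal) 0 (⟨Bu, hBu0⟩ : NNReal) A.toNNReal := by
    constructor
    · intro t ht
      apply Convex.lipschitzOnWith_of_nnnorm_fderiv_le (fun y _ => hud t y) _
        (convex_closedBall _ _)
      intro y _
      rw [← NNReal.coe_le_coe, coe_nnnorm, Real.coe_toNNReal A hA0]
      exact hA t (hIccsub ht) y
    · intro y _
      exact (hu.continuous.comp (continuous_id.prodMk continuous_const)).continuousOn
    · intro t ht y _
      exact (huv_bd t (hIccsub ht) y).1
    · have h1 : max (t₀ - t₀) (t₀ - 0) = t₀ := by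
        rw [sub_self, sub_zero]
        exact max_eq_right ht₀.1
      show Bu * max (t₀ - t₀) (t₀ - 0) ≤ Bu * T + 1 - ((0 : NNReal) : ℝ)
      rw [h1, NNReal.coe_zero]
      nlinarith [ht₀.2, ht₀.1]
  obtain ⟨X, hX0, hXd⟩ := hpl.exists_eq_forall_mem_Icc_hasDerivWithinAt₀
  replace hX0 : X t₀ = x₀ := hX0
  have hXc : ContinuousOn X (Icc 0 t₀) := fun s hs => (hXd s hs).continuousWithinAt
  -- the quantities along the flow
  set η : ℝ → ((EuclideanSpace ℝ (Fin d)) →L[ℝ] ℝ) := fun s => fderiv ℝ (ξ s) (X s) - fderiv ℝ (ξ' s) (X s) with hηdef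
  set gm : ℝ → ((EuclideanSpace ℝ (Fin d)) →L[ℝ] ℝ) := fun s => fderiv ℝ (fun y => fderiv ℝ (ξ' s) y (v s y)) (X s)
    with hgmdef
  set ηd : ℝ → ((EuclideanSpace ℝ (Fin d)) →L[ℝ] ℝ) := fun s => -((η s).comp (fderiv ℝ (u s) (X s))) + gm s with hηddef
  -- continuity facts
  have hWc : Continuous (fun p : ℝ × (EuclideanSpace ℝ (Fin d)) => fderiv ℝ (ξ p.1) p.2) :=
    partial_fderiv_cont (hξ.of_le one_le_two)
  have hW'c : Continuous (fun p : ℝ × (EuclideanSpace ℝ (Fin d)) => fderiv ℝ (ξ' p.1) p.2) :=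
    partial_fderiv_cont (hξ'.of_le one_le_two)
  have hDuc : Continuous (fun p : ℝ × (EuclideanSpace ℝ (Fin d)) => fderiv ℝ (u p.1) p.2) := partial_fderiv_cont hu
  have hγc : ContinuousOn (fun s : ℝ => (s, X s)) (Icc 0 t₀) := continuousOn_id.prodMk hXc
  have hηc : ContinuousOn η (Icc 0 t₀) :=
    (hWc.comp_continuousOn hγc).sub (hW'c.comp_continuousOn hγc)
  have hgmc : ContinuousOn gm (Icc 0 t₀) := hg_cont.comp_continuousOn hγc
  have hηdc : ContinuousOn ηd (Icc 0 t₀) :=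
    ((hηc.clm_comp (hDuc.comp_continuousOn hγc)).neg).add hgmc
  -- the derivative of η along the flow
  have hηd : ∀ s ∈ Icc (0:ℝ) t₀, HasDerivWithinAt η (ηd s) (Icc 0 t₀) s := by
    intro s hs
    have hsT : s ∈ Icc (0:ℝ) T := hIccsub hs
    obtain ⟨hdiffW, D, hD, hDf⟩ :=
      transport_core ξ u hξ hu s (fun y => htransport s hsT y) (X s) (u s (X s))
    obtain ⟨hdiffW', D', hD', hDf'⟩ :=
      transport_core ξ' (fun r y => u r y + v r y) hξ' (hu.add hv) s
        (fun y => htransport' s hsT y) (X s) (u s (X s))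
    have hγ : HasDerivWithinAt (fun r : ℝ => (r, X r)) ((1:ℝ), u s (X s)) (Icc 0 t₀) s :=
      (hasDerivAt_id s).hasDerivWithinAt.prodMk (hXd s hs)
    have h1 : HasDerivWithinAt (fun r => fderiv ℝ (ξ r) (X r)) (D (1, u s (X s)))
        (Icc 0 t₀) s := by have := hD.comp_hasDerivWithinAt s hγ; exact this
    have h1' : HasDerivWithinAt (fun r => fderiv ℝ (ξ' r) (X r)) (D' (1, u s (X s)))
        (Icc 0 t₀) s := by have := hD'.comp_hasDerivWithinAt s hγ; exact this
    have hsub := h1.sub h1'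
    have hkey : ηd s = D (1, u s (X s)) - D' (1, u s (X s)) := by
      rw [hDf, hDf']
      -- compute the first fderiv
      have hDumap : fderiv ℝ (fun y => u s y - u s (X s)) (X s) = fderiv ℝ (u s) (X s) :=
        fderiv_sub_const _
      have ha : fderiv ℝ (fun y => fderiv ℝ (ξ s) y (u s y - u s (X s))) (X s)
          = (fderiv ℝ (ξ s) (X s)).comp (fderiv ℝ (u s) (X s)) := by
        rw [fderiv_clm_apply hdiffW ((hud s (X s)).sub_const _), hDumap]
        simp [sub_self]
      -- compute the second fderiv
      have hfuneq : (fun y => fderiv ℝ (ξ' s) y (u s y + v s y - u s (X s)))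
          = fun y => fderiv ℝ (ξ' s) y (u s y - u s (X s)) + fderiv ℝ (ξ' s) y (v s y) := by
        funext y
        rw [← map_add]
        congr 1
        abel
      have hd1 : DifferentiableAt ℝ (fun y => fderiv ℝ (ξ' s) y (u s y - u s (X s))) (X s) :=
        hdiffW'.clm_apply ((hud s (X s)).sub_const _)
      have hd2 : DifferentiableAt ℝ (fun y => fderiv ℝ (ξ' s) y (v s y)) (X s) :=
        hdiffW'.clm_apply (hvd s (X s))
      have hb1 : fderiv ℝ (fun y => fderiv ℝ (ξ' s) y (u s y - u s (X s))) (X s)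
          = (fderiv ℝ (ξ' s) (X s)).comp (fderiv ℝ (u s) (X s)) := by
        rw [fderiv_clm_apply hdiffW' ((hud s (X s)).sub_const _), hDumap]
        simp [sub_self]
      have hb : fderiv ℝ (fun y => fderiv ℝ (ξ' s) y (u s y + v s y - u s (X s))) (X s)
          = (fderiv ℝ (ξ' s) (X s)).comp (fderiv ℝ (u s) (X s)) + gm s := by
        rw [hfuneq, fderiv_fun_add hd1 hd2, hb1]
      rw [ha, hb, hηddef, hηdef]
      simp only [ContinuousLinearMap.sub_comp]
      abel
    rw [hkey]
    exact hsub
  -- norm bounds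
  have hfM : ∀ s ∈ Icc (0:ℝ) t₀, ‖η s‖ ≤ B + B := by
    intro s hs
    have h := hξ_bd s (hIccsub hs) (X s)
    calc ‖η s‖ ≤ ‖fderiv ℝ (ξ s) (X s)‖ + ‖fderiv ℝ (ξ' s) (X s)‖ := norm_sub_le _ _
      _ ≤ B + B := add_le_add h.1 h.2.2.1
  have hbound : ∀ s ∈ Icc (0:ℝ) t₀, ‖ηd s‖ ≤ A * ‖η s‖ + G s := by
    intro s hs
    have hsT := hIccsub hs
    calc ‖ηd s‖ ≤ ‖(η s).comp (fderiv ℝ (u s) (X s))‖ + ‖gm s‖ := by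
          rw [hηddef]
          exact (norm_add_le _ _).trans (by rw [norm_neg])
      _ ≤ ‖η s‖ * ‖fderiv ℝ (u s) (X s)‖ + G s :=
          add_le_add (ContinuousLinearMap.opNorm_comp_le _ _) (hGpt s hsT (X s))
      _ ≤ A * ‖η s‖ + G s := by
          have := hA s hsT (X s)
          have hn : (0:ℝ) ≤ ‖η s‖ := norm_nonneg _
          nlinarith
  -- η vanishes at time 0
  have hη0 : η 0 = 0 := by
    rw [hηdef]
    simp [hinit (X 0)]
  -- the integral inequality
  have hyp : ∀ t ∈ Icc (0:ℝ) t₀, ‖η t‖ ≤ (∫ s in (0:ℝ)..t, G s) + A * ∫ s in (0:ℝ)..t, ‖η s‖ := by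
    intro t ht
    have htT : t ∈ Icc (0:ℝ) T := ⟨ht.1, ht.2.trans ht₀.2⟩
    have hsub' : Icc (0:ℝ) t ⊆ Icc 0 t₀ := Icc_subset_Icc le_rfl ht.2
    have hηdint : IntervalIntegrable ηd volume 0 t := by
      apply ContinuousOn.intervalIntegrable
      rw [uIcc_of_le ht.1]
      exact hηdc.mono hsub'
    have hFTC : (∫ s in (0:ℝ)..t, ηd s) = η t - η 0 := by
      apply intervalIntegral.integral_eq_sub_of_hasDeriv_right_of_le ht.1
        (hηc.mono hsub') _ hηdint
      intro r hr
      have hrt : r ∈ Icc (0:ℝ) t₀ := ⟨hr.1.le, hr.2.le.trans ht.2⟩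
      have h := hηd r hrt
      have hnr : Icc (0:ℝ) t₀ ∈ 𝓝 r :=
        Icc_mem_nhds hr.1 (lt_of_lt_of_le hr.2 ht.2)
      exact (h.hasDerivAt hnr).hasDerivWithinAt
    have hnint : IntervalIntegrable (fun s => ‖ηd s‖) volume 0 t := hηdint.norm
    have hηnint : IntervalIntegrable (fun s => ‖η s‖) volume 0 t := by
      apply ContinuousOn.intervalIntegrable
      rw [uIcc_of_le ht.1]
      exact (hηc.mono hsub').norm
    have hrint : IntervalIntegrable (fun s => A * ‖η s‖ + G s) volume 0 t :=
      (hηnint.const_mul A).add (hGint t htT)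
    calc ‖η t‖ = ‖∫ s in (0:ℝ)..t, ηd s‖ := by rw [hFTC, hη0, sub_zero]
      _ ≤ ∫ s in (0:ℝ)..t, ‖ηd s‖ := intervalIntegral.norm_integral_le_integral_norm ht.1
      _ ≤ ∫ s in (0:ℝ)..t, (A * ‖η s‖ + G s) := by
          apply intervalIntegral.integral_mono_on ht.1 hnint hrint
          intro s hs
          exact hbound s (hsub' hs)
      _ = (∫ s in (0:ℝ)..t, G s) + A * ∫ s in (0:ℝ)..t, ‖η s‖ := by
          rw [intervalIntegral.integral_add (hηnint.const_mul A) (hGint t htT),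
            intervalIntegral.integral_const_mul]
          ring
  -- monotonicity and nonnegativity of the primitive of G
  have hg0' : ∀ t ∈ Icc (0:ℝ) t₀, 0 ≤ ∫ s in (0:ℝ)..t, G s := by
    intro t ht
    exact intervalIntegral.integral_nonneg ht.1
      (fun s hs => hG0 s ⟨hs.1, hs.2.trans (ht.2.trans ht₀.2)⟩)
  have hgmono : ∀ s t : ℝ, 0 ≤ s → s ≤ t → t ≤ t₀ →
      (∫ r in (0:ℝ)..s, G r) ≤ ∫ r in (0:ℝ)..t, G r := by
    intro s t hs hst htt
    have htT : t ∈ Icc (0:ℝ) T := ⟨hs.trans hst, htt.trans ht₀.2⟩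
    have h1 : IntervalIntegrable G volume 0 s := hGint s ⟨hs, hst.trans htT.2⟩
    have h2 : IntervalIntegrable G volume s t := by
      apply (hGint t htT).mono_set
      rw [uIcc_of_le hst, uIcc_of_le (hs.trans hst)]
      exact Icc_subset_Icc hs le_rfl
    rw [← intervalIntegral.integral_add_adjacent_intervals h1 h2]
    have : 0 ≤ ∫ r in s..t, G r :=
      intervalIntegral.integral_nonneg hst
        (fun r hr => hG0 r ⟨hs.trans hr.1, hr.2.trans htT.2⟩)
    linarith
  -- Gronwall
  have hfinal := my_gronwall hA0 (by linarith : (0:ℝ) ≤ B + B) (fun s => ‖η s‖)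
    (fun t => ∫ s in (0:ℝ)..t, G s) (hηc.norm) hfM hg0' hgmono hyp t₀ ⟨ht₀.1, le_rfl⟩
  rw [hηdef] at hfinal
  simp only [hX0] at hfinal
  exact hfinal
end

section
/- There exists δ₀ ∈ (0,1) such that the following holds. Let δ ∈ (0, δ₀], ε ∈ (0, δ³], Ĉ ≥ 1, Ξ₀ ≥ 1, and D_{u,0} ≥ D_{R,0} > 0. For Z ≥ 1 define sequences recursively by N_k = Ĉ² Z² (D_{u,k}/D_{R,k})^{−1} D_{R,k}^{−2δ}, Ξ_{k+1} = Ĉ N_k Ξ_k, D_{u,k+1} = D_{R,k}, and D_{R,k+1} = D_{R,k}^{1+δ} / Z. Then there exists Z₀ ≥ 1, depending on δ, ε, Ĉ, Ξ₀, D_{u,0}, D_{R,0}, such that for every Z ≥ Z₀: (i) D_{R,k+1} ≤ D_{R,k}/2 for every k ≥ 0 and D_{R,k} ≤ 1 for every k ≥ 1; and (ii) Z^{−2+2ε} Ξ_k^{ε} (D_{u,k}/D_{R,k})^{2−ε} D_{R,k}^{2δ(1−ε)} ≤ 1 for every k ≥ 0. -/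
open Real

private lemma pea_aux1 (δ ε : ℝ) (hδ : 0 < δ) (hδ4 : δ ≤ 1/4) (hε : 0 < ε) (hεδ : ε ≤ δ^3) :
    3*ε ≤ δ := by
  nlinarith [sq_nonneg δ, mul_pos hδ hδ]

private lemma pea_aux3 (δ ε : ℝ) (hδ : 0 < δ) (hδ4 : δ ≤ 1/4) (hε : 0 < ε) (hεδ : ε ≤ δ^3) :
    δ ≤ 2*δ - 3*ε - 2*δ*ε := by
  nlinarith [sq_nonneg δ, mul_pos hδ hδ, mul_le_mul_of_nonneg_left hεδ hδ.le]

private lemma pea_aux4 (δ ε : ℝ) (hδ : 0 < δ) (hδ4 : δ ≤ 1/4) (hε : 0 < ε) (hεδ : ε ≤ δ^3) :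
    3*ε ≤ δ*(2*δ - 3*ε - 2*δ*ε) - 2*ε := by
  nlinarith [mul_le_mul_of_nonneg_left hεδ hδ.le, sq_nonneg δ, mul_pos hδ hδ,
    mul_le_mul_of_nonneg_left hεδ (mul_nonneg hδ.le hδ.le), mul_pos (mul_pos hδ hδ) hδ]

set_option maxHeartbeats 1000000 in
/-- Admissibility of the parameter evolution: there is a `δ₀ ∈ (0,1)` such that for all
`δ ∈ (0,δ₀]`, `ε ∈ (0,δ³]`, `Ĉ ≥ 1`, `Ξ₀ ≥ 1` and `D_{u,0} ≥ D_{R,0} > 0`, there is a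
`Z₀ ≥ 1` such that for all `Z ≥ Z₀` the sequences defined by the recursions
`N_k = Ĉ²Z²(D_{u,k}/D_{R,k})⁻¹ D_{R,k}^{-2δ}`, `Ξ_{k+1} = ĈN_kΞ_k`,
`D_{u,k+1} = D_{R,k}`, `D_{R,k+1} = D_{R,k}^{1+δ}/Z` satisfy geometric decay
`D_{R,k+1} ≤ D_{R,k}/2`, `D_{R,k} ≤ 1` for `k ≥ 1`, and the admissibility condition
`Z^{-2+2ε} Ξ_k^ε (D_{u,k}/D_{R,k})^{2-ε} D_{R,k}^{2δ(1-ε)} ≤ 1` for all `k`. -/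
theorem parameter_evolution_admissibility :
    ∃ δ₀ : ℝ, 0 < δ₀ ∧ δ₀ < 1 ∧
      ∀ δ ε Ch Ξ₀ Du₀ DR₀ : ℝ,
        0 < δ → δ ≤ δ₀ → 0 < ε → ε ≤ δ ^ 3 → 1 ≤ Ch → 1 ≤ Ξ₀ → 0 < DR₀ → DR₀ ≤ Du₀ →
        ∃ Z₀ : ℝ, 1 ≤ Z₀ ∧
          ∀ Z : ℝ, Z₀ ≤ Z →
          ∀ N Ξs Du DR : ℕ → ℝ,
            Ξs 0 = Ξ₀ → Du 0 = Du₀ → DR 0 = DR₀ →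
            (∀ k, N k = Ch ^ 2 * Z ^ 2 * (Du k / DR k)⁻¹ * DR k ^ (-(2 * δ))) →
            (∀ k, Ξs (k + 1) = Ch * N k * Ξs k) →
            (∀ k, Du (k + 1) = DR k) →
            (∀ k, DR (k + 1) = DR k ^ (1 + δ) / Z) →
            (∀ k, DR (k + 1) ≤ DR k / 2) ∧
            (∀ k, 1 ≤ k → DR k ≤ 1) ∧
            (∀ k, Z ^ (-2 + 2 * ε) * Ξs k ^ ε * (Du k / DR k) ^ (2 - ε) *
                DR k ^ (2 * δ * (1 - ε)) ≤ 1) := by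
  refine ⟨1/4, by norm_num, by norm_num, ?_⟩
  intro δ ε Ch Ξ₀ Du₀ DR₀ hδ hδ4 hε hεδ hCh hΞ₀ hDR₀ hDu₀
  have hδ1 : δ ≤ 1 := by linarith
  have hε1 : ε ≤ 1 := by nlinarith [pow_le_one₀ hδ.le hδ1 (n := 3)]
  have hεs : ε ≤ 1/64 := by nlinarith [pow_le_pow_left₀ hδ.le hδ4 3]
  have hChpos : (0:ℝ) < Ch := by linarith
  set M : ℝ := max 1 DR₀ with hMdef
  have hM1 : (1:ℝ) ≤ M := le_max_left _ _
  have hM0 : (0:ℝ) < M := by linarith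
  have hDRM : DR₀ ≤ M := le_max_right _ _
  have hDu₀pos : 0 < Du₀ := lt_of_lt_of_le hDR₀ hDu₀
  have hr₀ : (1:ℝ) ≤ Du₀ / DR₀ := (one_le_div hDR₀).2 hDu₀
  have hr₀pos : (0:ℝ) < Du₀ / DR₀ := by linarith
  have hr₀sq : (1:ℝ) ≤ (Du₀/DR₀)^2 := by nlinarith
  have hM2 : (1:ℝ) ≤ 2*M^2 := by nlinarith
  refine ⟨2 * M^2 * Ch * Ξ₀ * (Du₀/DR₀)^2, ?_, ?_⟩
  · calc (1:ℝ) ≤ 2*M^2 := hM2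
      _ ≤ 2*M^2*Ch := le_mul_of_one_le_right (by positivity) hCh
      _ ≤ 2*M^2*Ch*Ξ₀ := le_mul_of_one_le_right (by positivity) hΞ₀
      _ ≤ 2*M^2*Ch*Ξ₀*(Du₀/DR₀)^2 := le_mul_of_one_le_right (by positivity) hr₀sq
  intro Z hZ N Ξs Du DR hΞs0 hDu0 hDR0 hN hΞrec hDurec hDRrec
  have hZ₀pos : (0:ℝ) < 2 * M^2 * Ch * Ξ₀ * (Du₀/DR₀)^2 := by positivity
  have hZ2M2 : 2 * M^2 ≤ Z := by
    calc 2*M^2 ≤ 2*M^2*Ch := le_mul_of_one_le_right (by positivity) hCh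
      _ ≤ 2*M^2*Ch*Ξ₀ := le_mul_of_one_le_right (by positivity) hΞ₀
      _ ≤ 2*M^2*Ch*Ξ₀*(Du₀/DR₀)^2 := le_mul_of_one_le_right (by positivity) hr₀sq
      _ ≤ Z := hZ
  have hZ2M : 2 * M ≤ Z := by nlinarith
  have hZ1 : (1:ℝ) ≤ Z := by nlinarith
  have hZpos : (0:ℝ) < Z := by linarith
  -- positivity and boundedness of DR
  have hDRb : ∀ k, 0 < DR k ∧ DR k ≤ M := by
    intro k; induction k with
    | zero => rw [hDR0]; exact ⟨hDR₀, hDRM⟩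
    | succ k ih =>
      obtain ⟨hp, hle⟩ := ih
      have hpow : DR k ^ (1+δ) = DR k * DR k ^ δ := by
        rw [Real.rpow_add hp, Real.rpow_one]
      have hδM : DR k ^ δ ≤ M := by
        calc DR k ^ δ ≤ M ^ δ := Real.rpow_le_rpow hp.le hle hδ.le
          _ ≤ M ^ (1:ℝ) := Real.rpow_le_rpow_of_exponent_le hM1 hδ1
          _ = M := Real.rpow_one M
      have hppos : 0 < DR k ^ (1+δ) := Real.rpow_pos_of_pos hp _
      constructor
      · rw [hDRrec k]; exact div_pos hppos hZpos
      · rw [hDRrec k, hpow, div_le_iff₀ hZpos]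
        calc DR k * DR k ^ δ ≤ DR k * M := mul_le_mul_of_nonneg_left hδM hp.le
          _ ≤ M * M := mul_le_mul_of_nonneg_right hle hM0.le
          _ ≤ M * Z := mul_le_mul_of_nonneg_left (by nlinarith) hM0.le
  -- halving
  have hhalf : ∀ k, DR (k+1) ≤ DR k / 2 := by
    intro k
    obtain ⟨hp, hle⟩ := hDRb k
    have hpow : DR k ^ (1+δ) = DR k * DR k ^ δ := by
      rw [Real.rpow_add hp, Real.rpow_one]
    have hδM : DR k ^ δ ≤ M := by
      calc DR k ^ δ ≤ M ^ δ := Real.rpow_le_rpow hp.le hle hδ.le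
        _ ≤ M ^ (1:ℝ) := Real.rpow_le_rpow_of_exponent_le hM1 hδ1
        _ = M := Real.rpow_one M
    rw [hDRrec k, hpow, div_le_div_iff₀ hZpos two_pos]
    calc DR k * DR k ^ δ * 2 ≤ DR k * M * 2 :=
          mul_le_mul_of_nonneg_right (mul_le_mul_of_nonneg_left hδM hp.le) (by norm_num)
      _ = DR k * (2*M) := by ring
      _ ≤ DR k * Z := mul_le_mul_of_nonneg_left hZ2M hp.le
  -- DR k ≤ 1 for k ≥ 1
  have hDRone' : ∀ k, DR (k+1) ≤ 1 := by
    intro k; induction k with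
    | zero =>
      have hpow : DR₀ ^ (1+δ) = DR₀ * DR₀ ^ δ := by
        rw [Real.rpow_add hDR₀, Real.rpow_one]
      have hδM : DR₀ ^ δ ≤ M := by
        calc DR₀ ^ δ ≤ M ^ δ := Real.rpow_le_rpow hDR₀.le hDRM hδ.le
          _ ≤ M ^ (1:ℝ) := Real.rpow_le_rpow_of_exponent_le hM1 hδ1
          _ = M := Real.rpow_one M
      rw [hDRrec 0, hDR0, hpow, div_le_one hZpos]
      calc DR₀ * DR₀ ^ δ ≤ DR₀ * M := mul_le_mul_of_nonneg_left hδM hDR₀.le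
        _ ≤ M * M := mul_le_mul_of_nonneg_right hDRM hM0.le
        _ ≤ Z := by nlinarith
    | succ k ih =>
      have h := hhalf (k+1)
      linarith
  have hDRone : ∀ k, 1 ≤ k → DR k ≤ 1 := by
    intro k hk
    obtain ⟨j, rfl⟩ := Nat.exists_eq_add_of_le hk
    simpa [Nat.add_comm] using hDRone' j
  -- Du positivity and DR ≤ Du
  have hDub : ∀ k, 0 < Du k ∧ DR k ≤ Du k := by
    intro k; cases k with
    | zero => rw [hDu0, hDR0]; exact ⟨hDu₀pos, hDu₀⟩
    | succ k =>
      rw [hDurec k]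
      have h := hhalf k
      have hp := (hDRb k).1
      exact ⟨hp, by linarith⟩
  -- Ξ positivity
  have hΞpos : ∀ k, 0 < Ξs k := by
    intro k; induction k with
    | zero => rw [hΞs0]; linarith
    | succ k ih =>
      rw [hΞrec k, hN k]
      have h1 := (hDRb k).1
      have h2 := (hDub k).1
      positivity
  -- log recursions
  have hlDR : ∀ k, Real.log (DR (k+1)) = (1+δ) * Real.log (DR k) - Real.log Z := by
    intro k
    rw [hDRrec k, Real.log_div (Real.rpow_pos_of_pos (hDRb k).1 _).ne' hZpos.ne',
      Real.log_rpow (hDRb k).1]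
  have hlDu : ∀ k, Real.log (Du (k+1)) = Real.log (DR k) := fun k => by rw [hDurec k]
  have hlΞ : ∀ k, Real.log (Ξs (k+1)) = 3*Real.log Ch + 2*Real.log Z
      - (Real.log (Du k) - Real.log (DR k)) - 2*δ*Real.log (DR k) + Real.log (Ξs k) := by
    intro k
    have h1 := (hDRb k).1
    have h2 := (hDub k).1
    have h3 := hΞpos k
    have a2 : ((Du k / DR k)⁻¹ : ℝ) ≠ 0 := inv_ne_zero (div_pos h2 h1).ne'
    have a3 : DR k ^ (-(2*δ)) ≠ 0 := (Real.rpow_pos_of_pos h1 _).ne'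
    have a4 : (Ch^2*Z^2 : ℝ) ≠ 0 := by positivity
    have a5 : (Ch^2*Z^2*(Du k/DR k)⁻¹ : ℝ) ≠ 0 := mul_ne_zero a4 a2
    have a6 : (Ch^2*Z^2*(Du k/DR k)⁻¹ * DR k ^ (-(2*δ)) : ℝ) ≠ 0 := mul_ne_zero a5 a3
    have a7 : (Ch * (Ch^2*Z^2*(Du k/DR k)⁻¹ * DR k ^ (-(2*δ))) : ℝ) ≠ 0 :=
      mul_ne_zero hChpos.ne' a6
    rw [hΞrec k, hN k, Real.log_mul a7 h3.ne', Real.log_mul hChpos.ne' a6,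
      Real.log_mul a5 a3, Real.log_mul a4 a2,
      Real.log_mul (pow_ne_zero 2 hChpos.ne') (pow_ne_zero 2 hZpos.ne'),
      Real.log_pow, Real.log_pow, Real.log_inv, Real.log_div h2.ne' h1.ne',
      Real.log_rpow h1]
    push_cast; ring
  -- bounds on logs
  have hlm : ∀ k, Real.log (DR k) ≤ Real.log M := fun k =>
    Real.log_le_log (hDRb k).1 (hDRb k).2
  have hrk : ∀ k, Real.log (DR k) ≤ Real.log (Du k) := fun k =>
    Real.log_le_log (hDRb k).1 (hDub k).2
  have hc : 0 ≤ Real.log Ch := Real.log_nonneg hCh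
  have hmn : 0 ≤ Real.log M := Real.log_nonneg hM1
  have hξ₀n : 0 ≤ Real.log Ξ₀ := Real.log_nonneg hΞ₀
  have hl2 : 0 ≤ Real.log 2 := Real.log_nonneg one_le_two
  have hzn : 0 ≤ Real.log Z := Real.log_nonneg hZ1
  have hr₀n : 0 ≤ Real.log Du₀ - Real.log DR₀ := by
    have := Real.log_le_log hDR₀ hDu₀; linarith
  -- the main bound on log Z
  have hz : Real.log 2 + 2*Real.log M + Real.log Ch + Real.log Ξ₀
      + 2*(Real.log Du₀ - Real.log DR₀) ≤ Real.log Z := by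
    have b1 : ((2:ℝ)) ≠ 0 := two_ne_zero
    have b2 : (M^2 : ℝ) ≠ 0 := by positivity
    have b3 : (2*M^2 : ℝ) ≠ 0 := by positivity
    have b4 : (2*M^2*Ch : ℝ) ≠ 0 := by positivity
    have b5 : (2*M^2*Ch*Ξ₀ : ℝ) ≠ 0 := by positivity
    have b6 : ((Du₀/DR₀)^2 : ℝ) ≠ 0 := by positivity
    have heq : Real.log (2 * M^2 * Ch * Ξ₀ * (Du₀/DR₀)^2)
        = Real.log 2 + 2*Real.log M + Real.log Ch + Real.log Ξ₀
          + 2*(Real.log Du₀ - Real.log DR₀) := by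
      rw [Real.log_mul b5 b6, Real.log_mul b4 (by positivity : (Ξ₀:ℝ) ≠ 0),
        Real.log_mul b3 hChpos.ne', Real.log_mul b1 b2,
        Real.log_pow, Real.log_pow, Real.log_div hDu₀pos.ne' hDR₀.ne']
      push_cast; ring
    have hle := Real.log_le_log hZ₀pos hZ
    rw [heq] at hle
    linarith
  -- δ * log DR k ≤ log M
  have hdlm : ∀ k, δ * Real.log (DR k) ≤ Real.log M := by
    intro k
    rcases le_or_gt (Real.log (DR k)) 0 with h | h
    · nlinarith
    · nlinarith [hlm k]
  -- key invariant
  have hP : ∀ k, 3*ε*Real.log Ch + ε * Real.log (Ξs k)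
      ≤ (2*δ - 3*ε - 2*δ*ε) * (Real.log Z - δ * Real.log (DR k)) := by
    intro k; induction k with
    | zero =>
      rw [hΞs0, hDR0]
      have hd0 : δ * Real.log DR₀ ≤ Real.log M := by
        have := hdlm 0; rwa [hDR0] at this
      have h1 : Real.log Ch + Real.log Ξ₀ ≤ Real.log Z - δ * Real.log DR₀ := by linarith
      have h2 : 3*ε ≤ δ := pea_aux1 δ ε hδ hδ4 hε hεδ
      have h3 : ε ≤ δ := by linarith
      have h4 : δ ≤ 2*δ - 3*ε - 2*δ*ε := pea_aux3 δ ε hδ hδ4 hε hεδ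
      have h5 : 0 ≤ Real.log Z - δ * Real.log DR₀ := by linarith
      linarith [mul_le_mul_of_nonneg_right h2 hc, mul_le_mul_of_nonneg_right h3 hξ₀n,
        mul_le_mul_of_nonneg_left h1 hδ.le, mul_le_mul_of_nonneg_right h4 h5]
    | succ k ih =>
      rw [hlΞ k, hlDR k]
      have hfact2 : 0 ≤ ε * (Real.log (Du k) - Real.log (DR k)) :=
        mul_nonneg hε.le (by linarith [hrk k])
      have h2 : 3*ε ≤ δ*(2*δ - 3*ε - 2*δ*ε) - 2*ε := pea_aux4 δ ε hδ hδ4 hε hεδ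
      have hγ0 : 0 ≤ δ*(2*δ - 3*ε - 2*δ*ε) - 2*ε := by linarith
      have hczm : Real.log Ch ≤ Real.log Z - δ * Real.log (DR k) := by
        have := hdlm k; linarith
      have hfact3 : 3*ε*Real.log Ch
          ≤ (δ*(2*δ - 3*ε - 2*δ*ε) - 2*ε) * (Real.log Z - δ * Real.log (DR k)) := by
        calc 3*ε*Real.log Ch ≤ (δ*(2*δ - 3*ε - 2*δ*ε) - 2*ε) * Real.log Ch :=
              mul_le_mul_of_nonneg_right h2 hc
          _ ≤ _ := mul_le_mul_of_nonneg_left hczm hγ0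
      linarith [ih, hfact2, hfact3]
  -- conclusion
  refine ⟨hhalf, hDRone, ?_⟩
  intro k
  have h1 := (hDRb k).1
  have h2 := (hDub k).1
  have h3 := hΞpos k
  have hApos : 0 < Z ^ (-2 + 2 * ε) * Ξs k ^ ε * (Du k / DR k) ^ (2 - ε) *
      DR k ^ (2 * δ * (1 - ε)) := by positivity
  rw [← Real.log_nonpos_iff hApos.le]
  have b1 : (Z ^ (-2 + 2*ε) : ℝ) ≠ 0 := (Real.rpow_pos_of_pos hZpos _).ne'
  have b2 : (Ξs k ^ ε : ℝ) ≠ 0 := (Real.rpow_pos_of_pos h3 _).ne'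
  have b3 : ((Du k / DR k) ^ (2-ε) : ℝ) ≠ 0 := (Real.rpow_pos_of_pos (div_pos h2 h1) _).ne'
  have hA : Real.log (Z ^ (-2 + 2 * ε) * Ξs k ^ ε * (Du k / DR k) ^ (2 - ε) *
      DR k ^ (2 * δ * (1 - ε)))
      = (-2 + 2*ε)*Real.log Z + ε*Real.log (Ξs k)
        + (2-ε)*(Real.log (Du k) - Real.log (DR k)) + (2*δ*(1-ε))*Real.log (DR k) := by
    rw [Real.log_mul (mul_ne_zero (mul_ne_zero b1 b2) b3) (Real.rpow_pos_of_pos h1 _).ne',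
      Real.log_mul (mul_ne_zero b1 b2) b3, Real.log_mul b1 b2,
      Real.log_rpow hZpos, Real.log_rpow h3, Real.log_rpow (div_pos h2 h1), Real.log_rpow h1,
      Real.log_div h2.ne' h1.ne']
  rw [hA]
  cases k with
  | zero =>
    rw [hΞs0, hDu0, hDR0]
    have hl₀m : Real.log DR₀ ≤ Real.log M := by
      have := hlm 0; rwa [hDR0] at this
    have e1 : (2-2*ε) * (Real.log 2 + 2*Real.log M + Real.log Ch + Real.log Ξ₀
        + 2*(Real.log Du₀ - Real.log DR₀)) ≤ (2-2*ε)*Real.log Z :=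
      mul_le_mul_of_nonneg_left hz (by linarith)
    have e2 : 0 ≤ (2-3*ε)*Real.log Ξ₀ := mul_nonneg (by linarith) hξ₀n
    have e3 : 0 ≤ (2-3*ε)*(Real.log Du₀ - Real.log DR₀) := mul_nonneg (by linarith) hr₀n
    have e4 : 0 ≤ (2*δ*(1-ε))*(Real.log M - Real.log DR₀) :=
      mul_nonneg (mul_nonneg (by linarith) (by linarith)) (by linarith)
    have e5 : 0 ≤ (2-2*ε)*(Real.log 2 + Real.log Ch) := mul_nonneg (by linarith) (by linarith)
    have e6 : 0 ≤ (4 - 4*ε - 2*δ*(1-ε))*Real.log M := by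
      have h46 : (0:ℝ) ≤ 4 - 4*ε - 2*δ*(1-ε) := by
        nlinarith [mul_nonneg (by linarith : (0:ℝ) ≤ 1-ε) (by linarith : (0:ℝ) ≤ 4-2*δ)]
      exact mul_nonneg h46 hmn
    linarith [e1, e2, e3, e4, e5, e6]
  | succ k =>
    rw [hlΞ k, hlDR k, hlDu k]
    have hfact2 : 0 ≤ ε * (Real.log (Du k) - Real.log (DR k)) :=
      mul_nonneg hε.le (by linarith [hrk k])
    linarith [hP k, hfact2]
end
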